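/- Let A be an (nb)×(nb) cyclic block matrix as above (only nonzero blocks G^(1),...,G^(b) placed cyclically). If F is a principal square submatrix of A of size bm whose intersection with some block G^(i) is not an m × m matrix, then det(F) = 0. -/

import Mathlib

open Finset

open Fin.NatCast Fin.CommRing in
lemma cyclic_le_aux (b : ℕ) [NeZero b] (f : Fin b → ℕ) (h : ∀ i, f (i + 1) ≤ f i) :
    ∀ k l : ℕ, k ≤ l → f (l : Fin b) ≤ f (k : Fin b) := by
  intro k l hkl
  induction l with
  | zero => simp_all
  | succ l ih =>
    rcases Nat.lt_or_ge k (l + 1) with h1 | h2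
    · have hc : ((l + 1 : ℕ) : Fin b) = (l : Fin b) + 1 := by push_cast; ring
      rw [hc]
      exact le_trans (h _) (ih (Nat.lt_succ_iff.mp h1))
    · have : k = l + 1 := le_antisymm hkl h2
      subst this; exact le_rfl

open Fin.NatCast Fin.CommRing in
lemma cyclic_const (b : ℕ) [NeZero b] (f : Fin b → ℕ) (h : ∀ i, f (i + 1) ≤ f i)
    (i : Fin b) : f i = f 0 := by
  have h1 : f ((i.val : ℕ) : Fin b) ≤ f ((0 : ℕ) : Fin b) :=
    cyclic_le_aux b f h 0 i.val (Nat.zero_le _)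
  have h2 : f ((b : ℕ) : Fin b) ≤ f ((i.val : ℕ) : Fin b) :=
    cyclic_le_aux b f h i.val b i.isLt.le
  have hb : ((b : ℕ) : Fin b) = 0 := by simp
  have hi : ((i.val : ℕ) : Fin b) = i := Fin.cast_val_eq_self i
  rw [hb, hi] at h2
  rw [hi] at h1
  simpa using le_antisymm h1 h2

/-- If a principal `(bm)×(bm)` submatrix of the cyclic block matrix `A` meets some block
`G^(i)` in a submatrix which is not `m × m`, then its determinant vanishes. -/
theorem cyclicBlockPrincipalMinorVanishes (R : Type*) [CommRing R] (b n m : ℕ)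
    [NeZero b] (G : Fin b → Matrix (Fin n) (Fin n) R)
    (A : Matrix (Fin b × Fin n) (Fin b × Fin n) R)
    (hA : ∀ x y : Fin b × Fin n, A x y = if y.1 = x.1 + 1 then G x.1 x.2 y.2 else 0)
    (S : Finset (Fin b × Fin n)) (hS : S.card = b * m)
    (hbad : ∃ i : Fin b, (S.filter (fun x => x.1 = i)).card ≠ m ∨
      (S.filter (fun x => x.1 = i + 1)).card ≠ m) :
    (A.submatrix (fun x : {a // a ∈ S} => (x : Fin b × Fin n))
        (fun x : {a // a ∈ S} => (x : Fin b × Fin n))).det = 0 := by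
  classical
  rw [Matrix.det_apply]
  apply Finset.sum_eq_zero
  intro σ _
  have hzero : ∃ x : {a // a ∈ S}, A (↑(σ x)) ↑x = 0 := by
    by_contra hc
    push_neg at hc
    have hP : ∀ x : {a // a ∈ S},
        (x : Fin b × Fin n).1 = (σ x : Fin b × Fin n).1 + 1 := by
      intro x
      have hx := hc x
      rw [hA] at hx
      by_contra h
      simp [h] at hx
    set f : Fin b → ℕ := fun i => (S.filter (fun x => x.1 = i)).card with hf
    set g : Fin b × Fin n → Fin b × Fin n :=
      fun x => if h : x ∈ S then (σ ⟨x, h⟩ : Fin b × Fin n) else x with hg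
    have hmono : ∀ i : Fin b, f (i + 1) ≤ f i := by
      intro i
      apply Finset.card_le_card_of_injOn g
      · intro x hx
        rw [Finset.mem_coe, Finset.mem_filter] at hx
        obtain ⟨hxS, hx1⟩ := hx
        rw [Finset.mem_coe, Finset.mem_filter]
        have hgx : g x = (σ ⟨x, hxS⟩ : Fin b × Fin n) := by simp [hg, hxS]
        constructor
        · rw [hgx]; exact (σ ⟨x, hxS⟩).2
        · rw [hgx]
          have := hP ⟨x, hxS⟩
          simp only at this
          have : (σ ⟨x, hxS⟩ : Fin b × Fin n).1 + 1 = i + 1 := by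
            rw [← this, hx1]
          exact add_right_cancel this
      · intro x hx y hy hxy
        rw [Finset.mem_coe, Finset.mem_filter] at hx hy
        have hgx : g x = (σ ⟨x, hx.1⟩ : Fin b × Fin n) := by simp [hg, hx.1]
        have hgy : g y = (σ ⟨y, hy.1⟩ : Fin b × Fin n) := by simp [hg, hy.1]
        rw [hgx, hgy] at hxy
        have := σ.injective (Subtype.ext hxy)
        exact congrArg Subtype.val this
    have hconst : ∀ i : Fin b, f i = f 0 := cyclic_const b f hmono
    have hsum : ∑ i : Fin b, f i = b * m := by
      rw [← hS]
      exact (Finset.card_eq_sum_card_fiberwise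
        (fun x _ => Finset.mem_univ x.1)).symm
    have hsum0 : ∑ i : Fin b, f i = b * f 0 := by
      rw [Finset.sum_congr rfl (fun i _ => hconst i)]
      simp [mul_comm]
    have hf0 : f 0 = m := by
      have hbne : b ≠ 0 := NeZero.ne b
      have := hsum0.symm.trans hsum
      exact Nat.eq_of_mul_eq_mul_left (Nat.pos_of_ne_zero hbne) this
    have hall : ∀ i : Fin b, f i = m := fun i => (hconst i).trans hf0
    obtain ⟨i, hi⟩ := hbad
    rcases hi with hi | hi
    · exact hi (hall i)
    · exact hi (hall (i + 1))
  obtain ⟨x, hx⟩ := hzero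
  have : ∏ i : {a // a ∈ S},
      (A.submatrix (fun x : {a // a ∈ S} => (x : Fin b × Fin n))
        (fun x : {a // a ∈ S} => (x : Fin b × Fin n))) (σ i) i = 0 := by
    apply Finset.prod_eq_zero (Finset.mem_univ x)
    simpa [Matrix.submatrix_apply] using hx
  rw [this, smul_zero]
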